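/- (Spectral form of Theorem 1.) Let n ≥ 1 and consider n generators with voltage magnitudes V_i > 0, admittance magnitudes Y_{ij} ≥ 0 for i ≠ j, and angles θ_{ij}. Let δ* ∈ ℝⁿ satisfy 0 < θ_{ij} − δ*_i + δ*_j < π for all i ≠ j with Y_{ij} ≠ 0 (so the equilibrium lies in Ω), and assume Y_{ij} ≠ 0 ↔ Y_{ji} ≠ 0 for all i ≠ j and that the graph on Fin n with edges {i, j} whenever Y_{ij} ≠ 0 is connected (every pair of indices is related by the reflexive-transitive closure of this edge relation). Let L be the Jacobian of the flow function at δ*, with entries L_{ii} = ∑_{j ≠ i} V_i V_j Y_{ij} sin(θ_{ij} − δ*_i + δ*_j) and L_{ij} = −V_i V_j Y_{ij} sin(θ_{ij} − δ*_i + δ*_j) for j ≠ i. Let M_i > 0 and D_i > 0 for all i, and suppose condition (C): ∑_{j ≠ i} V_i V_j Y_{ij} sin(θ_{ij} − δ*_i + δ*_j) ≤ D_i²/(2·M_i) for every i. Then the swing-equation Jacobian J = [[0, I], [−M⁻¹L, −M⁻¹D]] satisfies: (a) every complex eigenvalue λ of J with λ ≠ 0 has Re(λ) < 0; and (b) the real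 kernel of J is one-dimensional, spanned by (𝟙, 0). -/

import Mathlib

open Matrix

lemma quad_abs (Mr Dr r : ℝ) (hM : 0 < Mr) (hD : 0 < Dr) (hr : 0 ≤ r)
    (hC : 2 * Mr * r ≤ Dr ^ 2) (lam : ℂ) (hlam : lam ≠ 0) (hre : 0 ≤ lam.re) :
    r < ‖(Mr : ℂ) * lam ^ 2 + (Dr : ℂ) * lam + (r : ℂ)‖ := by
  set a := lam.re with ha
  set b := lam.im with hb
  have hz : a ≠ 0 ∨ b ≠ 0 := by
    by_contra h
    push_neg at h
    exact hlam (Complex.ext h.1 h.2)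
  have key : 0 < a ^ 2 * Dr ^ 2 + a ^ 2 * Mr ^ 2 * b ^ 2 + Mr ^ 2 * b ^ 4 := by
    rcases hz with h | h
    · have h2 : 0 < a ^ 2 := lt_of_le_of_ne (sq_nonneg a) (Ne.symm (pow_ne_zero 2 h))
      nlinarith [sq_nonneg (a * Mr * b), sq_nonneg (Mr * b ^ 2), mul_pos h2 (mul_pos hD hD)]
    · have h2 : 0 < b ^ 2 := lt_of_le_of_ne (sq_nonneg b) (Ne.symm (pow_ne_zero 2 h))
      nlinarith [sq_nonneg (a * Dr), sq_nonneg (a * Mr * b), mul_pos (mul_pos hM hM) (mul_pos h2 h2)]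
  have f1 : (Mr * (a ^ 2 - b ^ 2) + Dr * a) ^ 2 + (Mr * (2 * a * b) + Dr * b) ^ 2
      ≥ (a ^ 2 + b ^ 2) * (Dr ^ 2 + Mr ^ 2 * b ^ 2) := by
    have h0 : 0 ≤ (a ^ 2 + b ^ 2) * (Mr * a * (Mr * a + 2 * Dr)) := by
      apply mul_nonneg (by positivity)
      exact mul_nonneg (mul_nonneg hM.le hre) (by nlinarith)
    nlinarith [h0]
  have f2 : 2 * Mr * r * b ^ 2 ≤ Dr ^ 2 * b ^ 2 := mul_le_mul_of_nonneg_right hC (sq_nonneg b)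
  have f3 : 0 ≤ 2 * r * (Mr * a ^ 2 + Dr * a) :=
    mul_nonneg (by linarith) (add_nonneg (by positivity) (mul_nonneg hD.le hre))
  have hsq : r ^ 2 < ‖(Mr : ℂ) * lam ^ 2 + (Dr : ℂ) * lam + (r : ℂ)‖ ^ 2 := by
    rw [Complex.sq_norm, Complex.normSq_apply]
    have hRe : ((Mr : ℂ) * lam ^ 2 + (Dr : ℂ) * lam + (r : ℂ)).re
        = Mr * (a ^ 2 - b ^ 2) + Dr * a + r := by
      simp only [Complex.add_re, Complex.mul_re, Complex.ofReal_re, Complex.ofReal_im, sq,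
        Complex.mul_im, Complex.mul_re, ← ha, ← hb]
      ring
    have hIm : ((Mr : ℂ) * lam ^ 2 + (Dr : ℂ) * lam + (r : ℂ)).im
        = Mr * (2 * a * b) + Dr * b := by
      simp only [Complex.add_im, Complex.mul_im, Complex.ofReal_re, Complex.ofReal_im, sq,
        Complex.mul_re, ← ha, ← hb]
      ring
    rw [hRe, hIm]
    nlinarith [f1, f2, f3, key]
  have habs : 0 ≤ ‖(Mr : ℂ) * lam ^ 2 + (Dr : ℂ) * lam + (r : ℂ)‖ := by positivity
  nlinarith [hsq, habs, hr]

/-- **Spectral form of Theorem 1.** For an equilibrium `δ*` in `Ω` of the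
lossy swing equations, with positive voltages, nonnegative admittances, a connected
underlying graph, positive inertias `M_i` and dampings `D_i`, and the stability
condition (C): `∑_{j≠i} V_i V_j Y_{ij} sin(θ_{ij} − δ*_i + δ*_j) ≤ D_i²/(2M_i)`,
the swing-equation Jacobian `J = [[0, I], [−M⁻¹L, −M⁻¹D]]` has all nonzero complex
eigenvalues in the open left half plane, and its real kernel is spanned by `(𝟙, 0)`. -/
theorem swing_equation_stability_certificate
    (n : ℕ) (hn : 1 ≤ n)
    (V : Fin n → ℝ) (Y θ : Fin n → Fin n → ℝ) (δstar : Fin n → ℝ)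
    (hV : ∀ i, 0 < V i)
    (hY : ∀ i j, i ≠ j → 0 ≤ Y i j)
    (hΩ : ∀ i j, i ≠ j → Y i j ≠ 0 →
      0 < θ i j - δstar i + δstar j ∧ θ i j - δstar i + δstar j < Real.pi)
    (hYsym : ∀ i j, i ≠ j → (Y i j ≠ 0 ↔ Y j i ≠ 0))
    (hconn : ∀ i j : Fin n,
      Relation.ReflTransGen (fun a b => a ≠ b ∧ Y a b ≠ 0) i j)
    (L : Matrix (Fin n) (Fin n) ℝ)
    (hLdiag : ∀ k, L k k =
      ∑ j ∈ Finset.univ.erase k, V k * V j * Y k j * Real.sin (θ k j - δstar k + δstar j))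
    (hLoff : ∀ k j, j ≠ k →
      L k j = -(V k * V j * Y k j * Real.sin (θ k j - δstar k + δstar j)))
    (Mv Dv : Fin n → ℝ) (hM : ∀ i, 0 < Mv i) (hD : ∀ i, 0 < Dv i)
    (M D : Matrix (Fin n) (Fin n) ℝ)
    (hMdef : M = Matrix.diagonal Mv) (hDdef : D = Matrix.diagonal Dv)
    (hC : ∀ i, (∑ j ∈ Finset.univ.erase i,
        V i * V j * Y i j * Real.sin (θ i j - δstar i + δstar j))
      ≤ (Dv i) ^ 2 / (2 * Mv i))
    (J : Matrix (Fin n ⊕ Fin n) (Fin n ⊕ Fin n) ℝ)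
    (hJ : J = Matrix.fromBlocks 0 1 (-(M⁻¹ * L)) (-(M⁻¹ * D))) :
    (∀ lam ∈ spectrum ℂ (J.map Complex.ofReal), lam ≠ 0 → lam.re < 0) ∧
    LinearMap.ker J.mulVecLin
      = Submodule.span ℝ {(Sum.elim (fun _ => (1 : ℝ)) 0 : Fin n ⊕ Fin n → ℝ)} := by
  have hne : Nonempty (Fin n) := ⟨⟨0, hn⟩⟩
  -- weights
  set w : Fin n → Fin n → ℝ :=
    fun i j => V i * V j * Y i j * Real.sin (θ i j - δstar i + δstar j) with hw
  have hw0 : ∀ i j, i ≠ j → 0 ≤ w i j := by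
    intro i j hij
    by_cases hy : Y i j = 0
    · simp [hw, hy]
    · have hs := hΩ i j hij hy
      have h1 : 0 < Real.sin (θ i j - δstar i + δstar j) :=
        Real.sin_pos_of_pos_of_lt_pi hs.1 hs.2
      have h2 : 0 < Y i j := (hY i j hij).lt_of_ne (Ne.symm hy)
      have h3 := hV i; have h4 := hV j
      positivity
  have hwpos : ∀ i j, i ≠ j → Y i j ≠ 0 → 0 < w i j := by
    intro i j hij hy
    have hs := hΩ i j hij hy
    have h1 : 0 < Real.sin (θ i j - δstar i + δstar j) :=
      Real.sin_pos_of_pos_of_lt_pi hs.1 hs.2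
    have h2 : 0 < Y i j := (hY i j hij).lt_of_ne (Ne.symm hy)
    have h3 := hV i; have h4 := hV j
    positivity
  have hLdiag' : ∀ k, L k k = ∑ j ∈ Finset.univ.erase k, w k j := hLdiag
  have hLoff' : ∀ k j, j ≠ k → L k j = -(w k j) := hLoff
  have hr0 : ∀ i, 0 ≤ L i i := by
    intro i
    rw [hLdiag']
    exact Finset.sum_nonneg fun j hj => hw0 i j (Finset.ne_of_mem_erase hj).symm
  -- inverse of M
  have hMne : ∀ i, Mv i ≠ 0 := fun i => (hM i).ne'
  have hMinv : M⁻¹ = Matrix.diagonal fun i => (Mv i)⁻¹ := by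
    rw [hMdef]
    apply Matrix.inv_eq_right_inv
    rw [Matrix.diagonal_mul_diagonal]
    convert Matrix.diagonal_one using 2
    exact funext fun i => mul_inv_cancel₀ (hMne i)
  -- row sums of L vanish
  have hrow : ∀ i, ∑ j, L i j = 0 := by
    intro i
    rw [← Finset.add_sum_erase _ _ (Finset.mem_univ i), hLdiag']
    rw [Finset.sum_congr rfl fun j hj => hLoff' i j (Finset.ne_of_mem_erase hj)]
    rw [Finset.sum_neg_distrib]
    ring
  have hL1 : L *ᵥ (fun _ => (1:ℝ)) = 0 := by
    funext i
    simp only [Matrix.mulVec, dotProduct, mul_one, Pi.zero_apply]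
    exact hrow i
  -- the kernel statement
  have hker : LinearMap.ker J.mulVecLin
      = Submodule.span ℝ {(Sum.elim (fun _ => (1 : ℝ)) 0 : Fin n ⊕ Fin n → ℝ)} := by
    apply le_antisymm
    · intro x hx
      rw [LinearMap.mem_ker, Matrix.mulVecLin_apply, hJ, Matrix.fromBlocks_mulVec] at hx
      set u : Fin n → ℝ := x ∘ Sum.inl with hu
      set v : Fin n → ℝ := x ∘ Sum.inr with hv
      have hv0 : ∀ i, v i = 0 := by
        intro i
        have := congrFun hx (Sum.inl i)
        simpa using this
      have hLu : ∀ i, (L *ᵥ u) i = 0 := by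
        intro i
        have h2 := congrFun hx (Sum.inr i)
        simp only [Sum.elim_inr, Pi.add_apply, Pi.zero_apply, Matrix.neg_mulVec,
          Pi.neg_apply] at h2
        have hv0' : v = 0 := funext hv0
        rw [hv0', Matrix.mulVec_zero] at h2
        have h3 : ((M⁻¹ * L) *ᵥ u) i = 0 := by simpa using h2
        rw [← Matrix.mulVec_mulVec, hMinv] at h3
        rw [Matrix.mulVec_diagonal] at h3
        exact (mul_eq_zero.mp h3).resolve_left (inv_ne_zero (hMne i))
      -- maximum principle
      obtain ⟨i₀, -, hmax⟩ := Finset.exists_max_image Finset.univ u Finset.univ_nonempty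
      have hconst : ∀ j, u j = u i₀ := by
        intro j
        induction hconn i₀ j with
        | refl => rfl
        | @tail k l hk hkl ih =>
          -- ih : u k = u i₀, hkl : k ≠ l ∧ Y k l ≠ 0
          have hrowk : ∑ j ∈ Finset.univ.erase k, w k j * (u k - u j) = 0 := by
            have h4 : ∑ j : Fin n, L k j * u j = 0 := by
              have := hLu k
              simpa [Matrix.mulVec, dotProduct] using this
            have e : ∑ j ∈ Finset.univ.erase k, w k j * (u k - u j)
                = ∑ j : Fin n, L k j * u j := by
              rw [← Finset.add_sum_erase _ (fun j => L k j * u j) (Finset.mem_univ k),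
                hLdiag', Finset.sum_mul, ← Finset.sum_add_distrib]
              refine Finset.sum_congr rfl fun j hj => ?_
              rw [hLoff' k j (Finset.ne_of_mem_erase hj)]
              ring
            exact e.trans h4
          have hterms : ∀ j ∈ Finset.univ.erase k, w k j * (u k - u j) = 0 := by
            rw [← Finset.sum_eq_zero_iff_of_nonneg]
            · exact hrowk
            · intro j hj
              have h5 : u j ≤ u k := by
                rw [ih]; exact hmax j (Finset.mem_univ j)
              exact mul_nonneg (hw0 k j (Finset.ne_of_mem_erase hj).symm) (by linarith)
          have hl : l ∈ Finset.univ.erase k :=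
            Finset.mem_erase.mpr ⟨(hkl.1).symm, Finset.mem_univ l⟩
          have h6 := hterms l hl
          have h7 : 0 < w k l := hwpos k l hkl.1 hkl.2
          have h8 : u k - u l = 0 := by
            rcases mul_eq_zero.mp h6 with h | h
            · exact absurd h h7.ne'
            · exact h
          rw [← ih]; linarith
      rw [Submodule.mem_span_singleton]
      refine ⟨u i₀, funext fun s => ?_⟩
      cases s with
      | inl j =>
        simp only [Pi.smul_apply, Sum.elim_inl, smul_eq_mul, mul_one]
        exact (hconst j).symm
      | inr j =>
        simp only [Pi.smul_apply, Sum.elim_inr, Pi.zero_apply, smul_eq_mul, mul_zero]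
        exact (hv0 j).symm
    · rw [Submodule.span_le, Set.singleton_subset_iff]
      rw [SetLike.mem_coe, LinearMap.mem_ker, Matrix.mulVecLin_apply, hJ,
        Matrix.fromBlocks_mulVec]
      have h1 : (Sum.elim (fun _ => (1:ℝ)) 0 : Fin n ⊕ Fin n → ℝ) ∘ Sum.inl
          = fun _ => (1:ℝ) := rfl
      have h2 : (Sum.elim (fun _ => (1:ℝ)) 0 : Fin n ⊕ Fin n → ℝ) ∘ Sum.inr
          = (0 : Fin n → ℝ) := rfl
      rw [h1, h2]
      funext s
      cases s with
      | inl j => simp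
      | inr j =>
        simp only [Sum.elim_inr, Pi.add_apply, Matrix.mulVec_zero, Pi.zero_apply,
          Matrix.neg_mulVec, Pi.neg_apply, add_zero]
        rw [← Matrix.mulVec_mulVec, hL1, Matrix.mulVec_zero]
        simp
  refine ⟨?_, hker⟩
  intro lam hmem hlam
  by_contra hpos
  push_neg at hpos
  rw [spectrum.mem_iff] at hmem
  have hdet : ((algebraMap ℂ (Matrix (Fin n ⊕ Fin n) (Fin n ⊕ Fin n) ℂ)) lam
      - J.map Complex.ofReal).det = 0 := by
    by_contra hd
    exact hmem ((Matrix.isUnit_iff_isUnit_det _).mpr (isUnit_iff_ne_zero.mpr hd))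
  obtain ⟨x, hx0, hx⟩ := Matrix.exists_mulVec_eq_zero_iff.mpr hdet
  have hxeq : (J.map Complex.ofReal) *ᵥ x = lam • x := by
    rw [Matrix.sub_mulVec] at hx
    have h1 : (algebraMap ℂ (Matrix (Fin n ⊕ Fin n) (Fin n ⊕ Fin n) ℂ)) lam *ᵥ x
        = lam • x := by
      rw [Algebra.algebraMap_eq_smul_one, Matrix.smul_mulVec, Matrix.one_mulVec]
    rw [h1] at hx
    funext s
    have h2 := congrFun hx s
    simp only [Pi.sub_apply, Pi.zero_apply, sub_eq_zero] at h2
    exact h2.symm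
  have hmapneg : ∀ (A : Matrix (Fin n) (Fin n) ℝ),
      (-A).map Complex.ofReal = -(A.map Complex.ofReal) := by
    intro A; ext i j; simp [Matrix.map_apply]
  have hJmap : J.map Complex.ofReal
      = Matrix.fromBlocks 0 1 (-((M⁻¹ * L).map Complex.ofReal))
        (-((M⁻¹ * D).map Complex.ofReal)) := by
    rw [hJ, Matrix.fromBlocks_map, Matrix.map_zero _ Complex.ofReal_zero,
      Matrix.map_one _ Complex.ofReal_zero Complex.ofReal_one, hmapneg, hmapneg]
  set u : Fin n → ℂ := x ∘ Sum.inl with hu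
  set v : Fin n → ℂ := x ∘ Sum.inr with hv
  rw [hJmap, Matrix.fromBlocks_mulVec] at hxeq
  have hveq : ∀ i, v i = lam * u i := by
    intro i
    have h2 := congrFun hxeq (Sum.inl i)
    simpa [hu, hv, Matrix.one_mulVec, Matrix.zero_mulVec] using h2
  have hbot : ∀ i, -((((M⁻¹ * L).map Complex.ofReal) *ᵥ u) i)
      - ((((M⁻¹ * D).map Complex.ofReal) *ᵥ v) i) = lam * v i := by
    intro i
    have h2 := congrFun hxeq (Sum.inr i)
    simp only [Sum.elim_inr, Pi.add_apply, Matrix.neg_mulVec, Pi.neg_apply,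
      Pi.smul_apply, smul_eq_mul] at h2
    rw [sub_eq_add_neg]; exact h2
  have hMD : M⁻¹ * D = Matrix.diagonal (fun i => (Mv i)⁻¹ * Dv i) := by
    rw [hMinv, hDdef, Matrix.diagonal_mul_diagonal]
  have hML : ∀ i, (((M⁻¹ * L).map Complex.ofReal) *ᵥ u) i
      = ((Mv i : ℂ))⁻¹ * ∑ j, (L i j : ℂ) * u j := by
    intro i
    simp only [Matrix.mulVec, dotProduct, Matrix.map_apply]
    rw [Finset.mul_sum]
    refine Finset.sum_congr rfl fun j _ => ?_
    rw [hMinv, Matrix.diagonal_mul]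
    push_cast
    ring
  have hpencil : ∀ i, ((Mv i : ℂ) * lam ^ 2 + (Dv i : ℂ) * lam + (L i i : ℂ)) * u i
      = -∑ j ∈ Finset.univ.erase i, (L i j : ℂ) * u j := by
    intro i
    have hb := hbot i
    rw [hML i] at hb
    have hMDv : (((M⁻¹ * D).map Complex.ofReal) *ᵥ v) i
        = ((Mv i : ℂ))⁻¹ * (Dv i : ℂ) * v i := by
      rw [hMD, Matrix.diagonal_map Complex.ofReal_zero, Matrix.mulVec_diagonal]
      push_cast
      ring
    rw [hMDv, hveq i] at hb
    have hMne' : (Mv i : ℂ) ≠ 0 := Complex.ofReal_ne_zero.mpr (hMne i)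
    have hsplit : (∑ j : Fin n, (L i j : ℂ) * u j)
        = (L i i : ℂ) * u i + ∑ j ∈ Finset.univ.erase i, (L i j : ℂ) * u j := by
      rw [← Finset.add_sum_erase _ _ (Finset.mem_univ i)]
    field_simp at hb
    have key : (Mv i : ℂ) * (((Mv i : ℂ) * lam ^ 2 + (Dv i : ℂ) * lam + (L i i : ℂ)) * u i
        + ∑ j ∈ Finset.univ.erase i, (L i j : ℂ) * u j) = 0 := by
      linear_combination -(Mv i : ℂ) * hb - (Mv i : ℂ) * hsplit
    rcases mul_eq_zero.mp key with h | h
    · exact absurd h hMne'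
    · exact eq_neg_of_add_eq_zero_left h
  have hune : u ≠ 0 := by
    intro h
    apply hx0
    funext s
    cases s with
    | inl j => exact congrFun h j
    | inr j =>
      show v j = 0
      rw [hveq j, congrFun h j]; simp
  obtain ⟨i, -, hmax⟩ := Finset.exists_max_image Finset.univ
    (fun j => ‖u j‖) Finset.univ_nonempty
  have hui : 0 < ‖u i‖ := by
    rcases Function.ne_iff.mp hune with ⟨j, hj⟩
    have h1 : 0 < ‖u j‖ := by
      simpa using norm_pos_iff.mpr hj
    exact lt_of_lt_of_le h1 (hmax j (Finset.mem_univ j))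
  have hbound : ‖(Mv i : ℂ) * lam ^ 2 + (Dv i : ℂ) * lam + ((L i i : ℝ) : ℂ)‖
      ≤ L i i := by
    have h1 := congrArg (‖·‖) (hpencil i)
    simp only [norm_mul, norm_neg] at h1
    have h2 : ‖∑ j ∈ Finset.univ.erase i, (L i j : ℂ) * u j‖
        ≤ L i i * ‖u i‖ := by
      refine le_trans (norm_sum_le _ _) ?_
      rw [hLdiag', Finset.sum_mul]
      refine Finset.sum_le_sum fun j hj => ?_
      rw [norm_mul, Complex.norm_real, Real.norm_eq_abs, hLoff' i j (Finset.ne_of_mem_erase hj),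
        abs_neg, abs_of_nonneg (hw0 i j (Finset.ne_of_mem_erase hj).symm)]
      exact mul_le_mul_of_nonneg_left (hmax j (Finset.mem_univ j))
        (hw0 i j (Finset.ne_of_mem_erase hj).symm)
    rw [← h1] at h2
    exact le_of_mul_le_mul_right h2 hui
  have hC' : 2 * Mv i * L i i ≤ Dv i ^ 2 := by
    have h3 := hC i
    rw [← hLdiag'] at h3
    have h4 := (le_div_iff₀ (by have := hM i; positivity : (0:ℝ) < 2 * Mv i)).mp h3
    linarith
  exact absurd hbound
    (not_le.mpr (quad_abs (Mv i) (Dv i) (L i i) (hM i) (hD i) (hr0 i) hC' lam hlam hpos))
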